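/- For a ∈ (0,1), let γ(a) = 0.1a + 0.9, q'(a) = (a/4)/(1 + a/2), and K₂(a,c,q) = (1+c)^q·(√(1+c²-ac))^{1-q}. Then log(K₂(a, a·γ(a), q'(a))) > a·γ(a)·q'(a)/4 for all a ∈ (0,1). -/

import Mathlib

set_option maxHeartbeats 1000000 in
/-- log(K₂(a, a·γ(a), q'(a))) > a·γ(a)·q'(a)/4 for all a ∈ (0,1). -/
theorem log_K2_gt (a : ℝ) (ha0 : 0 < a) (ha1 : a < 1)
    (γ q' c : ℝ) (hγ : γ = 0.1 * a + 0.9) (hq' : q' = (a / 4) / (1 + a / 2))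
    (hc : c = a * γ) :
    Real.log ((1 + c) ^ q' * (Real.sqrt (1 + c ^ 2 - a * c)) ^ (1 - q')) >
      a * γ * q' / 4 := by
  have hγ0 : 0.9 ≤ γ := by rw [hγ]; nlinarith
  have hγ1 : γ < 1 := by rw [hγ]; nlinarith
  have hc0 : 0 < c := by rw [hc]; nlinarith
  have hc1 : c < 1 := by rw [hc]; nlinarith
  have hca : a - c = 0.1 * a * (1 - a) := by rw [hc, hγ]; ring
  have hu0 : (0:ℝ) < 1 + c := by linarith
  have hv0 : (0.9:ℝ) ≤ 1 + c ^ 2 - a * c := by nlinarith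
  have hv0' : (0:ℝ) < 1 + c ^ 2 - a * c := by linarith
  have hpos : (0:ℝ) < 4 + 2 * a := by linarith
  have hq'mul : q' * (4 + 2 * a) = a := by
    rw [hq']; field_simp; ring
  have hq0 : 0 < q' := by nlinarith [hq'mul]
  have hq1 : q' < 1 := by nlinarith [hq'mul]
  -- rewrite the log
  have hsq : 0 < Real.sqrt (1 + c ^ 2 - a * c) := Real.sqrt_pos.mpr hv0'
  rw [Real.log_mul (ne_of_gt (Real.rpow_pos_of_pos hu0 _))
      (ne_of_gt (Real.rpow_pos_of_pos hsq _)),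
    Real.log_rpow hu0, Real.log_rpow hsq, Real.log_sqrt hv0'.le]
  -- lower bounds for logs
  have logl : ∀ x : ℝ, 0 < x → 1 - x⁻¹ ≤ Real.log x := by
    intro x hx
    have h := Real.log_le_sub_one_of_pos (inv_pos.mpr hx)
    rw [Real.log_inv] at h
    linarith
  have hlog1 : c / (1 + c) ≤ Real.log (1 + c) := by
    have h := logl (1 + c) hu0
    have : (1:ℝ) - (1 + c)⁻¹ = c / (1 + c) := by field_simp; ring
    linarith [this ▸ h]
  have hlog2 : (c ^ 2 - a * c) / (1 + c ^ 2 - a * c) ≤ Real.log (1 + c ^ 2 - a * c) := by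
    have h := logl (1 + c ^ 2 - a * c) hv0'
    have : (1:ℝ) - (1 + c ^ 2 - a * c)⁻¹ = (c ^ 2 - a * c) / (1 + c ^ 2 - a * c) := by
      rw [show c ^ 2 - a * c = (1 + c ^ 2 - a * c) - 1 by ring, sub_div, div_self hv0'.ne', one_div]
    linarith [this ▸ h]
  -- simple fractional bounds
  have h1 : c / 2 ≤ c / (1 + c) := by
    rw [div_le_div_iff₀ (by norm_num) hu0]
    nlinarith
  have h2 : (c ^ 2 - a * c) / 0.9 ≤ (c ^ 2 - a * c) / (1 + c ^ 2 - a * c) := by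
    rw [div_le_div_iff₀ (by norm_num) hv0']
    have hx : c ^ 2 - a * c ≤ 0 := by nlinarith
    nlinarith [mul_nonpos_of_nonpos_of_nonneg hx
      (by linarith : (0:ℝ) ≤ 1 + c ^ 2 - a * c - 0.9)]
  -- key inequality with only numeric denominators
  have e1 : (1 - q') * (4 + 2 * a) = 4 + a := by nlinarith [hq'mul]
  have goal' : 0 < (q' * (c / 2) + (1 - q') * ((c ^ 2 - a * c) / 0.9) / 2 - c * q' / 4)
      * (4 + 2 * a) := by
    have hexp : (q' * (c / 2) + (1 - q') * ((c ^ 2 - a * c) / 0.9) / 2 - c * q' / 4)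
        * (4 + 2 * a)
        = a * (c / 4) - (4 + a) * ((a - c) * c) / 1.8 := by
      linear_combination (c / 2 - c / 4) * hq'mul + ((c ^ 2 - a * c) / 1.8) * e1
    rw [hexp, hca]
    have k1 : 0 < a * c := mul_pos ha0 hc0
    have k2 : 0 < a * a * c := mul_pos (mul_pos ha0 ha0) hc0
    have k3 : (0:ℝ) < a * a * a * c := by positivity
    norm_num only
    linarith
  have h3 : c * q' / 4 < q' * (c / 2) + (1 - q') * ((c ^ 2 - a * c) / 0.9) / 2 := by
    nlinarith [goal', hpos]
  have hkey : c * q' / 4 < q' * (c / (1 + c))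
      + (1 - q') * ((c ^ 2 - a * c) / (1 + c ^ 2 - a * c)) / 2 := by
    have hm1 := mul_le_mul_of_nonneg_left h1 hq0.le
    have hm2 := mul_le_mul_of_nonneg_left h2 (by linarith : (0:ℝ) ≤ 1 - q')
    linarith
  have hm1 : q' * (c / (1 + c)) ≤ q' * Real.log (1 + c) :=
    mul_le_mul_of_nonneg_left hlog1 hq0.le
  have hm2 : (1 - q') * ((c ^ 2 - a * c) / (1 + c ^ 2 - a * c))
      ≤ (1 - q') * Real.log (1 + c ^ 2 - a * c) :=
    mul_le_mul_of_nonneg_left hlog2 (by linarith)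
  have hgc : a * γ = c := hc.symm
  rw [gt_iff_lt, hgc]
  linarith
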